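/- arXiv:1511.07734 — 2 statements merged into one kernel-verified Lean document; each statement's English description precedes it below -/
import Mathlib

section
/- Let p ∈ (1/2, 1). The generating function G : [0,1]^ℕ → [0,1]^ℕ defined by G(z)(n) = p·z(n+1)² + (1−p) has uncountably many fixed points. More precisely, for every c ∈ [(1−p)/p, 1] there exists a unique fixed point z of G with z(0) = c, and distinct values of c give distinct fixed points. -/
theorem stmt_4 (p : ℝ) (hp : p ∈ Set.Ioo (1/2 : ℝ) 1) :
    ¬ Set.Countable {z : ℕ → ℝ | (∀ n, z n ∈ Set.Icc (0:ℝ) 1) ∧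
        ∀ n, z n = p * (z (n + 1)) ^ 2 + (1 - p)} ∧
    (∀ c ∈ Set.Icc ((1 - p) / p) 1,
      ∃! z : ℕ → ℝ, (∀ n, z n ∈ Set.Icc (0:ℝ) 1) ∧
        (∀ n, z n = p * (z (n + 1)) ^ 2 + (1 - p)) ∧ z 0 = c) ∧
    (∀ c c' : ℝ, c ∈ Set.Icc ((1 - p) / p) 1 → c' ∈ Set.Icc ((1 - p) / p) 1 → c ≠ c' →
      ∀ z z' : ℕ → ℝ,
        ((∀ n, z n ∈ Set.Icc (0:ℝ) 1) ∧ (∀ n, z n = p * (z (n + 1)) ^ 2 + (1 - p)) ∧ z 0 = c) →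
        ((∀ n, z' n ∈ Set.Icc (0:ℝ) 1) ∧ (∀ n, z' n = p * (z' (n + 1)) ^ 2 + (1 - p)) ∧ z' 0 = c') →
        z ≠ z') := by
  obtain ⟨hp2, hp1⟩ := hp
  have hp0 : (0:ℝ) < p := by linarith
  set a : ℝ := (1 - p) / p with ha_def
  have ha0 : 0 ≤ a := div_nonneg (by linarith) hp0.le
  have ha1 : a < 1 := by
    rw [div_lt_one hp0]; linarith
  have hap : 1 - p ≤ a := by
    rw [ha_def, le_div_iff₀ hp0]
    nlinarith
  -- the sequence generated forward by the recursion
  set seq : ℝ → ℕ → ℝ := fun c => fun n =>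
    Nat.rec c (fun _ x => Real.sqrt ((x - (1 - p)) / p)) n with hseq
  have seq0 : ∀ c, seq c 0 = c := fun c => rfl
  have seqS : ∀ c n, seq c (n + 1) = Real.sqrt ((seq c n - (1 - p)) / p) := fun c n => rfl
  -- invariant
  have inv : ∀ c ∈ Set.Icc a 1, ∀ n, seq c n ∈ Set.Icc a 1 := by
    intro c hc n
    induction n with
    | zero => exact hc
    | succ n ih =>
      obtain ⟨h1, h2⟩ := ih
      rw [seqS]
      constructor
      · have hx : a ^ 2 ≤ (seq c n - (1 - p)) / p := by
          have h1' : 1 - p ≤ seq c n * p := by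
            rw [ha_def, div_le_iff₀ hp0] at h1; exact h1
          rw [le_div_iff₀ hp0, ha_def]
          have e : ((1 - p) / p) ^ 2 * p = (1 - p) ^ 2 / p := by field_simp
          rw [e, div_le_iff₀ hp0]
          nlinarith
        calc a = Real.sqrt (a ^ 2) := by rw [Real.sqrt_sq ha0]
        _ ≤ _ := Real.sqrt_le_sqrt hx
      · have hx : (seq c n - (1 - p)) / p ≤ 1 := by
          rw [div_le_one hp0]; linarith
        calc Real.sqrt ((seq c n - (1 - p)) / p) ≤ Real.sqrt 1 := Real.sqrt_le_sqrt hx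
        _ = 1 := Real.sqrt_one
  -- seq satisfies the recursion
  have rec_eq : ∀ c ∈ Set.Icc a 1, ∀ n,
      seq c n = p * (seq c (n + 1)) ^ 2 + (1 - p) := by
    intro c hc n
    have h1 := (inv c hc n).1
    have hnn : 0 ≤ (seq c n - (1 - p)) / p := div_nonneg (by linarith) hp0.le
    rw [seqS, Real.sq_sqrt hnn]
    field_simp
    ring
  -- existence
  have exist : ∀ c ∈ Set.Icc a 1,
      (∀ n, seq c n ∈ Set.Icc (0:ℝ) 1) ∧
      (∀ n, seq c n = p * (seq c (n + 1)) ^ 2 + (1 - p)) ∧ seq c 0 = c := by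
    intro c hc
    refine ⟨fun n => ⟨le_trans ha0 (inv c hc n).1, (inv c hc n).2⟩, rec_eq c hc, rfl⟩
  -- uniqueness
  have uniq : ∀ c z, (∀ n, z n ∈ Set.Icc (0:ℝ) 1) →
      (∀ n, z n = p * (z (n + 1)) ^ 2 + (1 - p)) → z 0 = c → z = seq c := by
    intro c z hz hrec h0
    funext n
    induction n with
    | zero => exact h0
    | succ n ih =>
      rw [seqS, ← ih]
      have hsq : (z n - (1 - p)) / p = (z (n + 1)) ^ 2 := by
        rw [hrec n]; field_simp; ring
      rw [hsq, Real.sqrt_sq (hz (n + 1)).1]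
  refine ⟨?_, ?_, ?_⟩
  · -- uncountability
    intro hcount
    have himg : Set.Icc a 1 ⊆ (fun z : ℕ → ℝ => z 0) ''
        {z : ℕ → ℝ | (∀ n, z n ∈ Set.Icc (0:ℝ) 1) ∧
          ∀ n, z n = p * (z (n + 1)) ^ 2 + (1 - p)} := by
      intro c hc
      obtain ⟨h1, h2, h3⟩ := exist c hc
      exact ⟨seq c, ⟨h1, h2⟩, h3⟩
    have hIcc : (Set.Icc a (1:ℝ)).Countable := (hcount.image _).mono himg
    have := Cardinal.mk_le_aleph0_iff.mpr (Set.countable_coe_iff.mpr hIcc)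
    rw [Cardinal.mk_Icc_real ha1] at this
    exact absurd this (not_le.mpr Cardinal.aleph0_lt_continuum)
  · intro c hc
    refine ⟨seq c, exist c hc, ?_⟩
    rintro z ⟨h1, h2, h3⟩
    exact uniq c z h1 h2 h3
  · rintro c c' hc hc' hne z z' ⟨_, _, h0⟩ ⟨_, _, h0'⟩ heq
    apply hne
    rw [← h0, ← h0', heq]
end

section
/- Let p, ε be real numbers with 0 < ε, 2p − ε > 1, p < 1/√2, and consider real sequences satisfying z(1) = √(((1−ε)z(0) − (1−p))/(p−ε)) and z(n+1) = √((z(n) − ε·z(n−1) − (1−p))/(p−ε)) for n ≥ 1. If z(0) ∈ ((1−p)/(p−ε), 1), then for all n ≥ 1: z(n) > z(n−1), z(n) ∈ ((1−p)/(p−ε), 1), and 1 − z(n) > (1 − z(n−1))/(2p). -/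
lemma key_step (p ε x y w : ℝ) (hε : 0 < ε) (h1 : 2 * p - ε > 1) (h2p : 2 * p ^ 2 < 1)
    (hx1 : (1 - p) / (p - ε) < x) (hx2 : x < 1) (hyx : y ≤ x)
    (hcontr : 1 - x > p * (1 - y))
    (hw : w = Real.sqrt ((x - ε * y - (1 - p)) / (p - ε))) :
    w > x ∧ (1 - p) / (p - ε) < w ∧ w < 1 ∧ 1 - w > (1 - x) / (2 * p) := by
  have hp1 : p < 1 := by nlinarith
  have hp0 : 1 / 2 < p := by nlinarith
  have hd : 0 < p - ε := by nlinarith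
  have hax : 1 - p < x * (p - ε) := by
    have := (div_lt_iff₀ hd).mp hx1
    linarith [this]
  have hx0 : 0 < x := by
    have ha0 : 0 < (1 - p) / (p - ε) := div_pos (by linarith) hd
    linarith
  have hv0 : 0 < 1 - y := by linarith
  set S : ℝ := (x - ε * y - (1 - p)) / (p - ε) with hS
  have hSx : x ^ 2 < S := by
    rw [hS, lt_div_iff₀ hd]
    nlinarith [mul_pos (sub_pos.mpr hx2) (sub_pos.mpr hax),
      mul_le_mul_of_nonneg_left hyx hε.le]
  have hS0 : 0 ≤ S := le_of_lt (lt_of_le_of_lt (sq_nonneg x) hSx)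
  have hwx : x < w := by
    rw [hw]
    exact (Real.lt_sqrt hx0.le).mpr hSx
  have hS1 : S < 1 := by
    rw [hS, div_lt_one hd]
    nlinarith [mul_nonneg hd.le hv0.le]
  have hw1 : w < 1 := by
    rw [hw]
    exact (Real.sqrt_lt' (by norm_num)).mpr (by nlinarith)
  have hw0 : 0 ≤ w := hw ▸ Real.sqrt_nonneg _
  have hw2 : w ^ 2 = S := by rw [hw]; exact Real.sq_sqrt hS0
  have hstep : (1 - S) / 2 ≤ 1 - w := by
    rw [div_le_iff₀ (by norm_num : (0:ℝ) < 2)]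
    nlinarith
  have hSval : 1 - S = ((1 - x) - ε * (1 - y)) / (p - ε) := by
    rw [hS]; field_simp; ring
  have hfin : (1 - x) / (2 * p) < (1 - S) / 2 := by
    rw [hSval, div_div, div_lt_div_iff₀ (by linarith) (by linarith)]
    nlinarith [mul_lt_mul_of_pos_left hcontr hε]
  exact ⟨hwx, lt_trans hx1 hwx, hw1, lt_of_lt_of_le hfin hstep⟩

theorem stmt_5 (p ε : ℝ) (hε : 0 < ε) (h1 : 2 * p - ε > 1) (h2 : p < 1 / Real.sqrt 2)
    (z : ℕ → ℝ) (h0 : z 0 ∈ Set.Ioo ((1 - p) / (p - ε)) 1)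
    (hrec1 : z 1 = Real.sqrt (((1 - ε) * z 0 - (1 - p)) / (p - ε)))
    (hrec : ∀ n : ℕ, 1 ≤ n →
      z (n + 1) = Real.sqrt ((z n - ε * z (n - 1) - (1 - p)) / (p - ε))) :
    ∀ n : ℕ, 1 ≤ n →
      z n > z (n - 1) ∧ z n ∈ Set.Ioo ((1 - p) / (p - ε)) 1 ∧
      1 - z n > (1 - z (n - 1)) / (2 * p) := by
  obtain ⟨h01, h02⟩ := h0
  have hs2 : (0:ℝ) < Real.sqrt 2 := Real.sqrt_pos.mpr (by norm_num)
  have hsq : Real.sqrt 2 ^ 2 = 2 := Real.sq_sqrt (by norm_num)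
  have hp0 : 0 < p := by
    by_contra h
    push_neg at h
    nlinarith
  have h2p : 2 * p ^ 2 < 1 := by
    have : p * Real.sqrt 2 < 1 := by
      rw [lt_div_iff₀ hs2] at h2; linarith
    nlinarith [mul_nonneg hp0.le hs2.le]
  have hp1 : p < 1 := by nlinarith
  intro n hn
  induction n, hn using Nat.le_induction with
  | base =>
    simp only [Nat.sub_self]
    have hw : z 1 = Real.sqrt ((z 0 - ε * z 0 - (1 - p)) / (p - ε)) := by
      rw [hrec1]; ring_nf
    obtain ⟨A, B, C, D⟩ := key_step p ε (z 0) (z 0) (z 1) hε h1 h2p h01 h02 le_rfl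
      (by nlinarith) hw
    exact ⟨A, ⟨B, C⟩, D⟩
  | succ n hn ih =>
    obtain ⟨A, ⟨B, C⟩, D⟩ := ih
    have hv0 : 0 < 1 - z (n - 1) := by linarith
    have hcontr : 1 - z n > p * (1 - z (n - 1)) := by
      have : (1 - z (n - 1)) / (2 * p) > p * (1 - z (n - 1)) := by
        rw [gt_iff_lt, lt_div_iff₀ (by linarith)]
        nlinarith
      linarith
    have hw := hrec n hn
    obtain ⟨A', B', C', D'⟩ := key_step p ε (z n) (z (n - 1)) (z (n + 1)) hε h1 h2p B C A.le
      hcontr hw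
    have hnn : n + 1 - 1 = n := rfl
    rw [hnn]
    exact ⟨A', ⟨B', C'⟩, D'⟩
end
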